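/- There exist real constants c₁ > 0, c₂ > 0 and an integer G such that for every integer g ≥ G the set D̃_g is finite and c₁·g^{3/2} ≤ #D̃_g ≤ c₂·g^{3/2}. -/

import Mathlib

/-- `N` is a repdigit in base `g`, one-digit numbers allowed:
`N = d * (g^k - 1)/(g-1)` for some digit `1 ≤ d ≤ g-1` and some `k ≥ 1`. -/
def RepdigitT (g N : ℕ) : Prop :=
  0 < N ∧ ∃ d k : ℕ, 1 ≤ d ∧ d ≤ g - 1 ∧ 1 ≤ k ∧ N * (g - 1) = d * (g ^ k - 1)

/-- The set of Diophantine triples with values in the extended repdigit set. -/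
def DioTriplesT (g : ℕ) : Set (ℕ × ℕ × ℕ) :=
  {p | 0 < p.2.2 ∧ p.2.2 < p.2.1 ∧ p.2.1 < p.1 ∧
    RepdigitT g (p.1 * p.2.1 + 1) ∧ RepdigitT g (p.1 * p.2.2 + 1) ∧
    RepdigitT g (p.2.1 * p.2.2 + 1)}


namespace S16

def Rep (g k : ℕ) : ℕ := ∑ i ∈ Finset.range k, g ^ i

lemma rep_mul {g : ℕ} (hg : 1 ≤ g) (k : ℕ) : (g - 1) * Rep g k = g ^ k - 1 := by
  induction k with
  | zero => simp [Rep]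
  | succ k ih =>
      have hX : 1 ≤ g ^ k := Nat.one_le_pow _ _ hg
      have h2 : (g - 1) * g ^ k = g * g ^ k - g ^ k := by
        rw [Nat.sub_mul, one_mul]
      rw [Rep, Finset.sum_range_succ, Nat.mul_add, ← Rep, ih, h2, pow_succ']
      have : g ^ k ≤ g * g ^ k := Nat.le_mul_of_pos_left _ (by omega)
      omega

lemma rep_pos {g : ℕ} (hg : 1 ≤ g) {k : ℕ} (hk : 1 ≤ k) : 0 < Rep g k := by
  have : g ^ 0 ≤ Rep g k := Finset.single_le_sum (f := fun i => g ^ i)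
    (fun i _ => Nat.zero_le _) (Finset.mem_range.mpr (by omega))
  simp at this; omega

lemma rep_ge {g : ℕ} (hg : 1 ≤ g) {k : ℕ} (hk : 1 ≤ k) : g ^ (k - 1) ≤ Rep g k := by
  exact Finset.single_le_sum (f := fun i => g ^ i)
    (fun i _ => Nat.zero_le _) (Finset.mem_range.mpr (by omega))

lemma rep_le {g : ℕ} (hg : 2 ≤ g) (k : ℕ) : Rep g k ≤ g ^ k - 1 := by
  have h := rep_mul (by omega : 1 ≤ g) k
  calc Rep g k ≤ (g - 1) * Rep g k := Nat.le_mul_of_pos_left _ (by omega)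
  _ = g ^ k - 1 := h

lemma rep_mul_int {g : ℕ} (hg : 1 ≤ g) (k : ℕ) :
    ((g:ℤ) - 1) * (Rep g k : ℤ) = (g:ℤ) ^ k - 1 := by
  have h := rep_mul hg k
  have hp : (1:ℕ) ≤ g ^ k := Nat.one_le_pow _ _ (by omega)
  zify [hg, hp] at h
  linarith

/-- extraction of a `Rep`-form decomposition from RepdigitT -/
lemma decomp {g N : ℕ} (hg : 2 ≤ g) (h : RepdigitT g N) :
    ∃ d k, 1 ≤ d ∧ d ≤ g - 1 ∧ 1 ≤ k ∧ N = d * Rep g k := by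
  obtain ⟨-, d, k, hd1, hd2, hk, he⟩ := h
  refine ⟨d, k, hd1, hd2, hk, ?_⟩
  have h1 : 1 ≤ g := by omega
  have : N * (g - 1) = (d * Rep g k) * (g - 1) := by
    rw [he, ← rep_mul h1 k]; ring
  exact Nat.eq_of_mul_eq_mul_right (by omega) this

lemma val_lb {g d k N : ℕ} (hg : 2 ≤ g) (hd : 1 ≤ d) (hk : 1 ≤ k)
    (hN : N = d * Rep g k) : g ^ (k - 1) ≤ N := by
  calc g ^ (k-1) ≤ Rep g k := rep_ge (by omega) hk
  _ ≤ d * Rep g k := Nat.le_mul_of_pos_left _ (by omega)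
  _ = N := hN.symm

lemma val_ub {g d k N : ℕ} (hg : 2 ≤ g) (hd : d ≤ g - 1)
    (hN : N = d * Rep g k) : N ≤ g ^ k - 1 := by
  calc N = d * Rep g k := hN
  _ ≤ (g - 1) * Rep g k := Nat.mul_le_mul_right _ hd
  _ = g ^ k - 1 := rep_mul (by omega) k

/-- exponents are monotone in the value, for arbitrary representations -/
lemma exp_mono {g N N' d d' k k' : ℕ} (hg : 2 ≤ g)
    (hd : 1 ≤ d) (hd2 : d ≤ g - 1) (hk : 1 ≤ k) (hN : N = d * Rep g k)
    (hd' : 1 ≤ d') (hd2' : d' ≤ g - 1) (hk' : 1 ≤ k') (hN' : N' = d' * Rep g k')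
    (hlt : N < N') : k ≤ k' := by
  by_contra hc
  push_neg at hc
  have h1 : N' ≤ g ^ k' - 1 := val_ub hg hd2' hN'
  have h2 : g ^ (k - 1) ≤ N := val_lb hg hd hk hN
  have h3 : g ^ k' ≤ g ^ (k - 1) := Nat.pow_le_pow_right (by omega) (by omega)
  have h4 : 1 ≤ g ^ k' := Nat.one_le_pow _ _ (by omega)
  omega

/-- counting points in `[0, L]` lying in a single residue class mod `q` -/
lemma ap_card (S : Finset ℕ) (q L : ℕ) (hq : 0 < q)
    (hub : ∀ x ∈ S, x ≤ L) (hmod : ∀ x ∈ S, ∀ y ∈ S, x % q = y % q) :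
    S.card ≤ L / q + 1 := by
  classical
  have hinj : Set.InjOn (· / q) S := by
    intro x hx y hy hxy
    have h1 : x % q = y % q := hmod x hx y hy
    have h2 := Nat.div_add_mod x q
    have h3 := Nat.div_add_mod y q
    simp only at hxy
    have h4 : q * (x / q) + x % q = q * (y / q) + y % q := by rw [hxy, h1]
    omega
  calc S.card = (S.image (· / q)).card := (Finset.card_image_of_injOn hinj).symm
  _ ≤ (Finset.range (L / q + 1)).card := by
      apply Finset.card_le_card
      intro z hz
      obtain ⟨x, hx, rfl⟩ := Finset.mem_image.mp hz
      exact Finset.mem_range.mpr (by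
        have := Nat.div_le_div_right (c := q) (hub x hx); omega)
  _ = L / q + 1 := Finset.card_range _

end S16

namespace S16

lemma spade_int (G X Y Z D E : ℤ) (M N : ℕ) (hg : 2 ≤ G) (hx : 1 ≤ X) (hz : 1 ≤ Z)
    (hzy : Z < Y) (hD1 : 1 ≤ D) (hD : D ≤ G - 1) (hE1 : 1 ≤ E) (hE : E ≤ G - 1)
    (hNM : N ≤ M)
    (e1 : (G - 1) * (X * Y + 1) = D * (G ^ M - 1))
    (e2 : (G - 1) * (X * Z + 1) = E * (G ^ N - 1)) :
    G ^ N ≤ 3 * G * Y := by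
  have hKid : Z * D * G ^ M - Y * E * G ^ N = Z * D - Y * E + (G - 1) * (Z - Y) := by
    linear_combination Y * e2 - Z * e1
  have hMsplit : G ^ M = G ^ N * G ^ (M - N) := by
    rw [← pow_add]; congr 1; omega
  have hKt : G ^ N * (Z * D * G ^ (M - N) - Y * E)
      = Z * D - Y * E + (G - 1) * (Z - Y) := by
    rw [← hKid, hMsplit]; ring
  have hY1 : (1:ℤ) ≤ Y := by linarith
  have hpowpos : (0:ℤ) < G ^ N := pow_pos (by omega) _
  have hpowMN : (1:ℤ) ≤ G ^ (M - N) := by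
    have := pow_pos (show (0:ℤ) < G by omega) (M - N); omega
  have htne : Z * D * G ^ (M - N) - Y * E ≠ 0 := by
    intro h0
    rw [h0, mul_zero] at hKt
    nlinarith [mul_nonneg (by linarith : (0:ℤ) ≤ G - 2) (by linarith : (0:ℤ) ≤ Y - Z),
      mul_nonneg (by nlinarith : (0:ℤ) ≤ Z * D - 1)
        (by linarith : (0:ℤ) ≤ G ^ (M - N) - 1)]
  have habs : G ^ N ≤ |G ^ N * (Z * D * G ^ (M - N) - Y * E)| := by
    rw [abs_mul, abs_of_pos hpowpos]
    have h6 : (1:ℤ) ≤ |Z * D * G ^ (M - N) - Y * E| := Int.one_le_abs htne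
    nlinarith
  have hub2 : |Z * D - Y * E + (G - 1) * (Z - Y)| ≤ 3 * G * Y := by
    have hA : Z * D ≤ G * Y := by nlinarith
    have hB : Y * E ≤ G * Y := by nlinarith
    have hC0 : 0 ≤ (G - 1) * (Y - Z) := by nlinarith
    have hC1 : (G - 1) * (Y - Z) ≤ G * Y := by nlinarith
    have hzD0 : 0 ≤ Z * D := by positivity
    have hyE0 : 0 ≤ Y * E := by positivity
    have hgy0 : 0 ≤ G * Y := by nlinarith
    rw [abs_le]
    constructor <;> linarith
  rw [hKt] at habs
  linarith

/-- Key gap lemma. -/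
lemma spade {g x y z D E M N : ℕ} (hg : 2 ≤ g) (hx : 1 ≤ x) (hz : 1 ≤ z) (hzy : z < y)
    (hD1 : 1 ≤ D) (hD : D ≤ g - 1) (hE1 : 1 ≤ E) (hE : E ≤ g - 1) (hNM : N ≤ M)
    (h1 : x * y + 1 = D * Rep g M) (h2 : x * z + 1 = E * Rep g N) :
    g ^ N ≤ 3 * g * y := by
  have hg1 : (1:ℕ) ≤ g := by omega
  have e1 : ((g:ℤ) - 1) * ((x:ℤ) * (y:ℤ) + 1) = (D:ℤ) * ((g:ℤ) ^ M - 1) := by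
    have h1' : ((x:ℤ) * y + 1) = (D:ℤ) * (Rep g M : ℤ) := by exact_mod_cast h1
    rw [h1', ← rep_mul_int hg1 M]; ring
  have e2 : ((g:ℤ) - 1) * ((x:ℤ) * (z:ℤ) + 1) = (E:ℤ) * ((g:ℤ) ^ N - 1) := by
    have h2' : ((x:ℤ) * z + 1) = (E:ℤ) * (Rep g N : ℤ) := by exact_mod_cast h2
    rw [h2', ← rep_mul_int hg1 N]; ring
  have hgz : (2:ℤ) ≤ (g:ℤ) := by exact_mod_cast hg
  have hDub : (D:ℤ) ≤ (g:ℤ) - 1 := by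
    have : (D:ℤ) ≤ ((g - 1 : ℕ) : ℤ) := by exact_mod_cast hD
    omega
  have hEub : (E:ℤ) ≤ (g:ℤ) - 1 := by
    have : (E:ℤ) ≤ ((g - 1 : ℕ) : ℤ) := by exact_mod_cast hE
    omega
  have := spade_int (g:ℤ) x y z D E M N hgz (by exact_mod_cast hx)
    (by exact_mod_cast hz) (by exact_mod_cast hzy) (by exact_mod_cast hD1) hDub
    (by exact_mod_cast hE1) hEub hNM e1 e2
  exact_mod_cast this

end S16

namespace S16

set_option maxHeartbeats 1000000 in
lemma wlem_int (G A B C D1 D2 D3 : ℤ) (m n l : ℕ) (hG : 5 ≤ G)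
    (hC1 : 1 ≤ C) (hC : C ≤ 3 * G) (hCB : C < B) (hBA : B < A)
    (hD11 : 1 ≤ D1) (hD1 : D1 ≤ G - 1) (hD21 : 1 ≤ D2) (hD2 : D2 ≤ G - 1)
    (hD31 : 1 ≤ D3) (hD3 : D3 ≤ G - 1)
    (hl : 1 ≤ l) (hln : l ≤ n) (hnm : n ≤ m)
    (E1 : (G - 1) * (A * B + 1) = D1 * (G ^ m - 1))
    (E2 : (G - 1) * (A * C + 1) = D2 * (G ^ n - 1))
    (E3 : (G - 1) * (B * C + 1) = D3 * (G ^ l - 1)) :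
    l ≤ 5 := by
  have base : ((G - 1) * (A * C + 1) - (G - 1)) * ((G - 1) * (B * C + 1) - (G - 1))
      = C ^ 2 * (G - 1) * ((G - 1) * (A * B + 1) - (G - 1)) := by ring
  rw [E1, E2, E3] at base
  have hmsplit : G ^ m = G ^ l * G ^ (m - l) := by rw [← pow_add]; congr 1; omega
  have hnsplit : G ^ n = G ^ l * G ^ (n - l) := by rw [← pow_add]; congr 1; omega
  rw [hmsplit, hnsplit] at base
  set P : ℤ := G ^ (m - l) with hP
  set Q : ℤ := G ^ (n - l) with hQ
  set L : ℤ := G ^ l with hL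
  have hW : C ^ 2 * (G - 1) * (D1 + G - 1) + (D2 + G - 1) * (D3 + G - 1)
      = L * (C ^ 2 * (G - 1) * D1 * P - D2 * D3 * (Q * L) + D2 * (D3 + G - 1) * Q
          + (D2 + G - 1) * D3) := by
    linear_combination base
  clear base E1 E2 E3
  have hLpos : (0:ℤ) < L := pow_pos (by omega) _
  have hWpos : (0:ℤ) < C ^ 2 * (G - 1) * (D1 + G - 1) + (D2 + G - 1) * (D3 + G - 1) := by
    have t1 : (0:ℤ) < (D2 + G - 1) * (D3 + G - 1) := mul_pos (by omega) (by omega)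
    have t2 : (0:ℤ) ≤ C ^ 2 * (G - 1) * (D1 + G - 1) :=
      mul_nonneg (mul_nonneg (sq_nonneg C) (by omega)) (by omega)
    linarith
  have hTpos : (0:ℤ) < C ^ 2 * (G - 1) * D1 * P - D2 * D3 * (Q * L) + D2 * (D3 + G - 1) * Q
      + (D2 + G - 1) * D3 := by
    by_contra hcon
    push_neg at hcon
    have : L * (C ^ 2 * (G - 1) * D1 * P - D2 * D3 * (Q * L) + D2 * (D3 + G - 1) * Q
        + (D2 + G - 1) * D3) ≤ L * 0 := mul_le_mul_of_nonneg_left hcon (le_of_lt hLpos)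
    rw [mul_zero] at this
    linarith
  have hLW : L ≤ C ^ 2 * (G - 1) * (D1 + G - 1) + (D2 + G - 1) * (D3 + G - 1) := by
    have h1 : (1:ℤ) ≤ C ^ 2 * (G - 1) * D1 * P - D2 * D3 * (Q * L) + D2 * (D3 + G - 1) * Q
        + (D2 + G - 1) * D3 := by linarith [Int.lt_iff_add_one_le.mp hTpos]
    calc L = L * 1 := (mul_one _).symm
    _ ≤ L * (C ^ 2 * (G - 1) * D1 * P - D2 * D3 * (Q * L) + D2 * (D3 + G - 1) * Q
          + (D2 + G - 1) * D3) := mul_le_mul_of_nonneg_left h1 (le_of_lt hLpos)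
    _ = _ := hW.symm
  have hWub : C ^ 2 * (G - 1) * (D1 + G - 1) + (D2 + G - 1) * (D3 + G - 1)
      ≤ 22 * G ^ 4 := by
    have h1 : C ^ 2 ≤ 9 * G ^ 2 := by nlinarith
    have h2 : (0:ℤ) ≤ G - 1 := by omega
    have h4 : (0:ℤ) ≤ D1 + G - 1 := by omega
    have k1 : C ^ 2 * (G - 1) * (D1 + G - 1) ≤ 9 * G ^ 2 * (G - 1) * (2 * G) := by
      calc C ^ 2 * (G - 1) * (D1 + G - 1) ≤ 9 * G ^ 2 * (G - 1) * (D1 + G - 1) := by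
            exact mul_le_mul_of_nonneg_right (mul_le_mul_of_nonneg_right h1 h2) h4
      _ ≤ 9 * G ^ 2 * (G - 1) * (2 * G) := by
            exact mul_le_mul_of_nonneg_left (by omega)
              (mul_nonneg (by positivity) h2)
    have k2 : (D2 + G - 1) * (D3 + G - 1) ≤ (2 * G) * (2 * G) :=
      mul_le_mul (by omega) (by omega) (by omega) (by omega)
    have f1 : (0:ℤ) ≤ 4 * G ^ 2 + 18 * G - 4 := by nlinarith [sq_nonneg G]
    have f2 : (0:ℤ) ≤ G ^ 2 * (4 * G ^ 2 + 18 * G - 4) := mul_nonneg (sq_nonneg G) f1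
    nlinarith [f2]
  by_contra hcon
  push_neg at hcon
  have h6 : G ^ 6 ≤ L := by
    rw [hL]
    exact pow_le_pow_right₀ (by omega) (by omega)
  have hg4 : (0:ℤ) < G ^ 4 := pow_pos (by omega) _
  have h25 : (25:ℤ) ≤ G ^ 2 := by nlinarith
  nlinarith [mul_nonneg (le_of_lt hg4) (show (0:ℤ) ≤ G ^ 2 - 25 by linarith),
    (show G ^ 6 = G ^ 4 * G ^ 2 by ring)]
end S16

namespace S16

lemma toInt_eq {g x y d k : ℕ} (hg : 1 ≤ g) (h : x * y + 1 = d * Rep g k) :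
    ((g:ℤ) - 1) * ((x:ℤ) * (y:ℤ) + 1) = (d:ℤ) * ((g:ℤ) ^ k - 1) := by
  have h' : ((x:ℤ) * y + 1) = (d:ℤ) * (Rep g k : ℤ) := by exact_mod_cast h
  rw [h', ← rep_mul_int hg k]; ring

lemma cast_le_pred {g d : ℕ} (hg : 2 ≤ g) (hd : d ≤ g - 1) : (d:ℤ) ≤ (g:ℤ) - 1 := by
  have : (d:ℤ) ≤ ((g - 1 : ℕ) : ℤ) := by exact_mod_cast hd
  omega

/-- the main structural bounds for a Diophantine triple -/
lemma triple_bounds {g a b c d₁ d₂ d₃ m n l : ℕ} (hg : 100 ≤ g)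
    (hc : 1 ≤ c) (hcb : c < b) (hba : b < a)
    (hd₁1 : 1 ≤ d₁) (hd₁ : d₁ ≤ g - 1) (hm : 1 ≤ m) (e1 : a * b + 1 = d₁ * Rep g m)
    (hd₂1 : 1 ≤ d₂) (hd₂ : d₂ ≤ g - 1) (hn : 1 ≤ n) (e2 : a * c + 1 = d₂ * Rep g n)
    (hd₃1 : 1 ≤ d₃) (hd₃ : d₃ ≤ g - 1) (hl : 1 ≤ l) (e3 : b * c + 1 = d₃ * Rep g l) :
    c ≤ 3 * g ∧ n ≤ 6 ∧ m ≤ 12 := by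
  have hg2 : 2 ≤ g := by omega
  have ha1 : 1 ≤ a := by omega
  have hb1 : 1 ≤ b := by omega
  -- exponent orderings
  have hnm : n ≤ m := by
    apply exp_mono hg2 hd₂1 hd₂ hn rfl hd₁1 hd₁ hm rfl
    have : a * c < a * b := (Nat.mul_lt_mul_left (by omega)).mpr hcb
    rw [← e1, ← e2]; omega
  have hln : l ≤ n := by
    apply exp_mono hg2 hd₃1 hd₃ hl rfl hd₂1 hd₂ hn rfl
    have : b * c < a * c := (Nat.mul_lt_mul_right (by omega)).mpr hba
    rw [← e2, ← e3]; omega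
  -- spade : g^n ≤ 3 g b
  have hsp : g ^ n ≤ 3 * g * b := spade hg2 ha1 hc hcb hd₁1 hd₁ hd₂1 hd₂ hnm e1 e2
  -- bc < g^l
  have hbc : b * c < g ^ l := by
    have h1 : b * c + 1 ≤ g ^ l - 1 := val_ub hg2 hd₃ e3
    have h2 : 1 ≤ g ^ l := Nat.one_le_pow _ _ (by omega)
    omega
  -- c ≤ 3g
  have hc3 : c ≤ 3 * g := by
    have h1 : c * g ^ n ≤ c * (3 * g * b) := Nat.mul_le_mul_left _ hsp
    have h2 : c * (3 * g * b) = 3 * g * (b * c) := by ring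
    have h3 : 3 * g * (b * c) < 3 * g * g ^ l := (Nat.mul_lt_mul_left (by omega)).mpr hbc
    have h4 : g ^ l ≤ g ^ n := Nat.pow_le_pow_right (by omega) hln
    have h5 : c * g ^ n < 3 * g * g ^ n := by
      calc c * g ^ n ≤ c * (3 * g * b) := h1
      _ = 3 * g * (b * c) := h2
      _ < 3 * g * g ^ l := h3
      _ ≤ 3 * g * g ^ n := Nat.mul_le_mul_left _ h4
    have h6 := (Nat.mul_lt_mul_right (pow_pos (show 0 < g by omega) n)).mp h5
    omega
  -- l ≤ 5 via wlem_int
  have hl5 : l ≤ 5 := by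
    have a1 : (5:ℤ) ≤ (g:ℤ) := by exact_mod_cast (by omega : 5 ≤ g)
    have a2 : (1:ℤ) ≤ (c:ℤ) := by exact_mod_cast hc
    have a3 : (c:ℤ) ≤ 3 * (g:ℤ) := by exact_mod_cast (by omega : c ≤ 3 * g)
    have a4 : (c:ℤ) < (b:ℤ) := by exact_mod_cast hcb
    have a5 : (b:ℤ) < (a:ℤ) := by exact_mod_cast hba
    have a6 : (1:ℤ) ≤ (d₁:ℤ) := by exact_mod_cast hd₁1
    have a7 : (1:ℤ) ≤ (d₂:ℤ) := by exact_mod_cast hd₂1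
    have a8 : (1:ℤ) ≤ (d₃:ℤ) := by exact_mod_cast hd₃1
    exact wlem_int (g:ℤ) (a:ℤ) (b:ℤ) (c:ℤ) (d₁:ℤ) (d₂:ℤ) (d₃:ℤ) m n l
      a1 a2 a3 a4 a5 a6 (cast_le_pred hg2 hd₁) a7 (cast_le_pred hg2 hd₂)
      a8 (cast_le_pred hg2 hd₃) hl hln hnm
      (toInt_eq (by omega) e1) (toInt_eq (by omega) e2) (toInt_eq (by omega) e3)
  -- n ≤ 6
  have hn6 : n ≤ 6 := by
    have h1 : b ≤ b * c := Nat.le_mul_of_pos_right _ (by omega)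
    have h2 : g ^ n ≤ 3 * g * (b * c) := le_trans hsp (Nat.mul_le_mul_left _ h1)
    have h3 : 3 * g * (b * c) < 3 * g * g ^ l := (Nat.mul_lt_mul_left (by omega)).mpr hbc
    have h4 : g ^ l ≤ g ^ 5 := Nat.pow_le_pow_right (by omega) hl5
    have h5 : g ^ n < g ^ 7 := by
      calc g ^ n < 3 * g * g ^ l := by omega
      _ ≤ 3 * g * g ^ 5 := Nat.mul_le_mul_left _ h4
      _ < g * g * g ^ 5 := by
          have : 3 * g < g * g := by nlinarith
          exact (Nat.mul_lt_mul_right (pow_pos (show 0 < g by omega) _)).mpr this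
      _ = g ^ 7 := by ring
    have := (Nat.pow_lt_pow_iff_right (by omega : 1 < g)).mp h5
    omega
  -- m ≤ 12
  have hm12 : m ≤ 12 := by
    have h1 : a ≤ a * c := Nat.le_mul_of_pos_right _ (by omega)
    have h2 : a * c + 1 ≤ g ^ n - 1 := val_ub hg2 hd₂ e2
    have h3 : a < g ^ n := by
      have : 1 ≤ g ^ n := Nat.one_le_pow _ _ (by omega)
      omega
    have h4 : g ^ (m - 1) ≤ a * b + 1 := val_lb hg2 hd₁1 hm e1
    have hb' : b ≤ a - 1 := by omega
    have h5a : a * b ≤ a * (a - 1) := Nat.mul_le_mul_left _ hb'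
    have h5b : a * (a - 1) + a = a * a := by
      have hx : (a - 1) + 1 = a := by omega
      calc a * (a - 1) + a = a * ((a - 1) + 1) := by ring
      _ = a * a := by rw [hx]
    have h5 : a * b + 1 ≤ a * a := by omega
    have h6 : a * a < g ^ n * g ^ n := Nat.mul_lt_mul_of_lt_of_lt h3 h3
    have h7 : g ^ (m - 1) < g ^ (n + n) := by
      rw [pow_add]; omega
    have := (Nat.pow_lt_pow_iff_right (by omega : 1 < g)).mp h7
    omega
  exact ⟨hc3, hn6, hm12⟩

end S16

namespace S16

open scoped Classical

lemma cong_mod_le {g k q u u' d d' : ℕ} (hg : 2 ≤ g) (hq : 1 ≤ q) (hk : 1 ≤ k)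
    (hdd : d ≤ d')
    (e : q * u + 1 = d * Rep g k) (e' : q * u' + 1 = d' * Rep g k) : d % q = d' % q := by
  have hR : 0 < Rep g k := rep_pos (by omega) hk
  have huu : u ≤ u' := by
    have h1 : d * Rep g k ≤ d' * Rep g k := Nat.mul_le_mul_right _ hdd
    have h2 : q * u ≤ q * u' := by omega
    exact Nat.le_of_mul_le_mul_left h2 (by omega)
  have hZ : ((d' - d : ℕ) : ℤ) * (Rep g k : ℤ) = (q:ℤ) * ((u' - u : ℕ) : ℤ) := by
    rw [Nat.cast_sub hdd, Nat.cast_sub huu]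
    have c1 : ((q:ℤ)) * u + 1 = (d:ℤ) * (Rep g k : ℤ) := by exact_mod_cast e
    have c2 : ((q:ℤ)) * u' + 1 = (d':ℤ) * (Rep g k : ℤ) := by exact_mod_cast e'
    linear_combination c1 - c2
  have hdvdZ : (q:ℤ) ∣ ((d' - d : ℕ) : ℤ) * ((Rep g k : ℕ) : ℤ) := ⟨_, hZ⟩
  have hdvd : q ∣ (d' - d) * Rep g k := by exact_mod_cast hdvdZ
  have hcop : Nat.Coprime q (Rep g k) := by
    have h1 : Nat.gcd q (Rep g k) ∣ q * u := Dvd.dvd.mul_right (Nat.gcd_dvd_left _ _) _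
    have h2 : Nat.gcd q (Rep g k) ∣ q * u + 1 := by
      rw [e]; exact Dvd.dvd.mul_left (Nat.gcd_dvd_right _ _) _
    have h3 : Nat.gcd q (Rep g k) ∣ 1 := by
      have := Nat.dvd_sub h2 h1
      simpa using this
    exact Nat.dvd_one.mp h3
  have hqd : q ∣ d' - d := hcop.dvd_of_dvd_mul_right hdvd
  exact (Nat.modEq_iff_dvd' hdd).mpr hqd

lemma cong_mod {g k q u u' d d' : ℕ} (hg : 2 ≤ g) (hq : 1 ≤ q) (hk : 1 ≤ k)
    (e : q * u + 1 = d * Rep g k) (e' : q * u' + 1 = d' * Rep g k) : d % q = d' % q := by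
  rcases le_total d d' with h | h
  · exact cong_mod_le hg hq hk h e e'
  · exact (cong_mod_le hg hq hk h e' e).symm

/-- the main fiber counting bound -/
lemma fiber_card {g : ℕ} (hg : 100 ≤ g) (F : Finset (ℕ × ℕ × ℕ))
    (hF : ∀ p ∈ F, p ∈ DioTriplesT g) (c n m : ℕ) (hc : 1 ≤ c) (hn : 1 ≤ n) (hm : 2 ≤ m) :
    (F.filter (fun p : ℕ × ℕ × ℕ => p.2.2 = c ∧
      (∃ d₂, 1 ≤ d₂ ∧ d₂ ≤ g - 1 ∧ p.1 * p.2.2 + 1 = d₂ * Rep g n) ∧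
      (∃ d₁, 1 ≤ d₁ ∧ d₁ ≤ g - 1 ∧ p.1 * p.2.1 + 1 = d₁ * Rep g m))).card
      ≤ 2 * ((g - 1) / c + 1) := by
  classical
  have hg2 : 2 ≤ g := by omega
  have hRn : 0 < Rep g n := rep_pos (by omega) hn
  have hRm : 0 < Rep g m := rep_pos (by omega) (by omega)
  set S := F.filter (fun p : ℕ × ℕ × ℕ => p.2.2 = c ∧
      (∃ d₂, 1 ≤ d₂ ∧ d₂ ≤ g - 1 ∧ p.1 * p.2.2 + 1 = d₂ * Rep g n) ∧
      (∃ d₁, 1 ≤ d₁ ∧ d₁ ≤ g - 1 ∧ p.1 * p.2.1 + 1 = d₁ * Rep g m)) with hSdef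
  have hext : ∀ p ∈ S, p ∈ DioTriplesT g ∧ p.2.2 = c ∧
      (∃ d₂, 1 ≤ d₂ ∧ d₂ ≤ g - 1 ∧ p.1 * c + 1 = d₂ * Rep g n ∧
        (p.1 * c + 1) / Rep g n = d₂) ∧
      (∃ d₁, 1 ≤ d₁ ∧ d₁ ≤ g - 1 ∧ p.1 * p.2.1 + 1 = d₁ * Rep g m ∧
        (p.1 * p.2.1 + 1) / Rep g m = d₁) := by
    intro p hp
    obtain ⟨hpF, hpc, ⟨d₂, h1, h2, h3⟩, ⟨d₁, h4, h5, h6⟩⟩ := Finset.mem_filter.mp hp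
    rw [hpc] at h3
    refine ⟨hF p hpF, hpc, ⟨d₂, h1, h2, h3, ?_⟩, ⟨d₁, h4, h5, h6, ?_⟩⟩
    · rw [h3]; exact Nat.mul_div_cancel _ hRn
    · rw [h6]; exact Nat.mul_div_cancel _ hRm
  have hcardS : S.card = ∑ d ∈ S.image (fun p : ℕ × ℕ × ℕ => (p.1 * c + 1) / Rep g n),
      (S.filter (fun p : ℕ × ℕ × ℕ => (p.1 * c + 1) / Rep g n = d)).card :=
    Finset.card_eq_sum_card_image _ S
  have hsub : ∀ d ∈ S.image (fun p : ℕ × ℕ × ℕ => (p.1 * c + 1) / Rep g n),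
      (S.filter (fun p : ℕ × ℕ × ℕ => (p.1 * c + 1) / Rep g n = d)).card ≤ 2 := by
    intro d hd
    obtain ⟨p₀, hp₀S, hp₀d⟩ := Finset.mem_image.mp hd
    obtain ⟨hp₀D, hp₀c, ⟨d₂, hd₂1, hd₂ub, he₂, he₂'⟩, -⟩ := hext p₀ hp₀S
    have hd₂d : d₂ = d := by rw [← he₂', hp₀d]
    have ha1 : 1 ≤ p₀.1 := by
      obtain ⟨x1, x2, x3, -⟩ := hp₀D
      omega
    have hsame : ∀ p ∈ S.filter (fun p : ℕ × ℕ × ℕ => (p.1 * c + 1) / Rep g n = d),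
        p.1 = p₀.1 := by
      intro p hp
      obtain ⟨hpS, hpd⟩ := Finset.mem_filter.mp hp
      obtain ⟨hpD, hpc, ⟨e₂, hE1, hE2, hE3, hE4⟩, -⟩ := hext p hpS
      have he : e₂ = d := by rw [← hE4]; exact hpd
      rw [he, ← hd₂d] at hE3
      have hmm : p.1 * c + 1 = p₀.1 * c + 1 := by rw [hE3, he₂]
      have : p.1 * c = p₀.1 * c := by omega
      exact Nat.eq_of_mul_eq_mul_right (by omega) this
    have hinj1 : Set.InjOn (fun p : ℕ × ℕ × ℕ => (p.1 * p.2.1 + 1) / Rep g m)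
        (S.filter (fun p : ℕ × ℕ × ℕ => (p.1 * c + 1) / Rep g n = d)) := by
      intro p hp q hq hfpq
      have hp' : p ∈ S.filter (fun p : ℕ × ℕ × ℕ => (p.1 * c + 1) / Rep g n = d) := hp
      have hq' : q ∈ S.filter (fun p : ℕ × ℕ × ℕ => (p.1 * c + 1) / Rep g n = d) := hq
      obtain ⟨hpS, hpd⟩ := Finset.mem_filter.mp hp'
      obtain ⟨hqS, hqd⟩ := Finset.mem_filter.mp hq'
      obtain ⟨hpD, hpc, -, ⟨dp, hdp1, hdpub, hdpe, hdpe'⟩⟩ := hext p hpS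
      obtain ⟨hqD, hqc, -, ⟨dq, hdq1, hdqub, hdqe, hdqe'⟩⟩ := hext q hqS
      have h1 : p.1 = p₀.1 := hsame p hp'
      have h2 : q.1 = p₀.1 := hsame q hq'
      simp only at hfpq
      have hdpq : dp = dq := by rw [← hdpe', ← hdqe']; exact hfpq
      have hb : p.2.1 = q.2.1 := by
        rw [h1] at hdpe
        rw [h2, ← hdpq] at hdqe
        have hmm : p₀.1 * p.2.1 + 1 = p₀.1 * q.2.1 + 1 := by rw [hdpe, hdqe]
        have : p₀.1 * p.2.1 = p₀.1 * q.2.1 := by omega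
        exact Nat.eq_of_mul_eq_mul_left (by omega) this
      have hcc : p.2.2 = q.2.2 := by rw [hpc, hqc]
      have h12 : p.1 = q.1 := by rw [h1, h2]
      exact Prod.ext h12 (Prod.ext hb hcc)
    have hcardT : (S.filter (fun p : ℕ × ℕ × ℕ => (p.1 * c + 1) / Rep g n = d)).card
        = ((S.filter (fun p : ℕ × ℕ × ℕ => (p.1 * c + 1) / Rep g n = d)).image
            (fun p : ℕ × ℕ × ℕ => (p.1 * p.2.1 + 1) / Rep g m)).card :=
      (Finset.card_image_of_injOn hinj1).symm
    have hAP : ((S.filter (fun p : ℕ × ℕ × ℕ => (p.1 * c + 1) / Rep g n = d)).image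
        (fun p : ℕ × ℕ × ℕ => (p.1 * p.2.1 + 1) / Rep g m)).card
        ≤ min (g - 1) (p₀.1 * p₀.1 / g ^ (m - 1)) / p₀.1 + 1 := by
      apply ap_card _ p₀.1 _ (by omega)
      · intro x hx
        obtain ⟨p, hpT, hpx⟩ := Finset.mem_image.mp hx
        obtain ⟨hpS, hpd⟩ := Finset.mem_filter.mp hpT
        obtain ⟨hpD, hpc, -, ⟨dp, hdp1, hdpub, hdpe, hdpe'⟩⟩ := hext p hpS
        have hx' : x = dp := by rw [← hpx]; exact hdpe'
        rw [hx']
        have h1 : p.1 = p₀.1 := hsame p hpT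
        obtain ⟨y1, y2, y3, -⟩ := hpD
        refine le_min hdpub ?_
        have hba : p.2.1 ≤ p₀.1 - 1 := by omega
        have h5a : p₀.1 * p.2.1 ≤ p₀.1 * (p₀.1 - 1) := Nat.mul_le_mul_left _ hba
        have h5b : p₀.1 * (p₀.1 - 1) + p₀.1 = p₀.1 * p₀.1 := by
          have hy : (p₀.1 - 1) + 1 = p₀.1 := by omega
          calc p₀.1 * (p₀.1 - 1) + p₀.1 = p₀.1 * ((p₀.1 - 1) + 1) := by ring
          _ = p₀.1 * p₀.1 := by rw [hy]
        rw [h1] at hdpe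
        have h5 : p₀.1 * p.2.1 + 1 ≤ p₀.1 * p₀.1 := by omega
        have h6 : dp * g ^ (m - 1) ≤ dp * Rep g m :=
          Nat.mul_le_mul_left _ (rep_ge (by omega) (by omega))
        have h7 : dp * g ^ (m - 1) ≤ p₀.1 * p₀.1 := by omega
        exact Nat.le_div_iff_mul_le (pow_pos (show 0 < g by omega) _) |>.mpr h7
      · intro x hx y hy
        obtain ⟨p, hpT, hpx⟩ := Finset.mem_image.mp hx
        obtain ⟨q, hqT, hqy⟩ := Finset.mem_image.mp hy
        obtain ⟨hpS, -⟩ := Finset.mem_filter.mp hpT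
        obtain ⟨hqS, -⟩ := Finset.mem_filter.mp hqT
        obtain ⟨hpD, hpc, -, ⟨dp, hdp1, hdpub, hdpe, hdpe'⟩⟩ := hext p hpS
        obtain ⟨hqD, hqc, -, ⟨dq, hdq1, hdqub, hdqe, hdqe'⟩⟩ := hext q hqS
        have hx' : x = dp := by rw [← hpx]; exact hdpe'
        have hy' : y = dq := by rw [← hqy]; exact hdqe'
        rw [hx', hy']
        have h1 : p.1 = p₀.1 := hsame p hpT
        have h2 : q.1 = p₀.1 := hsame q hqT
        rw [h1] at hdpe; rw [h2] at hdqe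
        exact cong_mod hg2 ha1 (by omega) hdpe hdqe
    have hmin : min (g - 1) (p₀.1 * p₀.1 / g ^ (m - 1)) / p₀.1 ≤ 1 := by
      by_contra hcon
      push_neg at hcon
      have h2 : 2 ≤ min (g - 1) (p₀.1 * p₀.1 / g ^ (m - 1)) / p₀.1 := hcon
      have h3 : 2 * p₀.1 ≤ min (g - 1) (p₀.1 * p₀.1 / g ^ (m - 1)) :=
        (Nat.le_div_iff_mul_le (by omega)).mp h2
      have h4 : 2 * p₀.1 ≤ g - 1 := le_trans h3 (min_le_left _ _)
      have h5 : 2 * p₀.1 ≤ p₀.1 * p₀.1 / g ^ (m - 1) := le_trans h3 (min_le_right _ _)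
      have h6 : 2 * p₀.1 * g ^ (m - 1) ≤ p₀.1 * p₀.1 :=
        (Nat.le_div_iff_mul_le (pow_pos (show 0 < g by omega) _)).mp h5
      have h7 : 2 * g ^ (m - 1) ≤ p₀.1 := by
        have hmm : p₀.1 * (2 * g ^ (m - 1)) ≤ p₀.1 * p₀.1 := by
          calc p₀.1 * (2 * g ^ (m - 1)) = 2 * p₀.1 * g ^ (m - 1) := by ring
          _ ≤ p₀.1 * p₀.1 := h6
        exact Nat.le_of_mul_le_mul_left hmm (by omega)
      have h8 : g ≤ g ^ (m - 1) := by
        calc g = g ^ 1 := (pow_one g).symm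
        _ ≤ g ^ (m - 1) := Nat.pow_le_pow_right (by omega) (by omega)
      omega
    calc (S.filter (fun p : ℕ × ℕ × ℕ => (p.1 * c + 1) / Rep g n = d)).card
        = ((S.filter (fun p : ℕ × ℕ × ℕ => (p.1 * c + 1) / Rep g n = d)).image
            (fun p : ℕ × ℕ × ℕ => (p.1 * p.2.1 + 1) / Rep g m)).card := hcardT
    _ ≤ min (g - 1) (p₀.1 * p₀.1 / g ^ (m - 1)) / p₀.1 + 1 := hAP
    _ ≤ 2 := by omega
  have hJcard : (S.image (fun p : ℕ × ℕ × ℕ => (p.1 * c + 1) / Rep g n)).card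
      ≤ (g - 1) / c + 1 := by
    apply ap_card _ c _ (by omega)
    · intro x hx
      obtain ⟨p, hpS, hpx⟩ := Finset.mem_image.mp hx
      obtain ⟨hpD, hpc, ⟨d₂, hd₂1, hd₂ub, he₂, he₂'⟩, -⟩ := hext p hpS
      rw [← hpx]
      show (p.1 * c + 1) / Rep g n ≤ g - 1
      rw [he₂']
      exact hd₂ub
    · intro x hx y hy
      obtain ⟨p, hpS, hpx⟩ := Finset.mem_image.mp hx
      obtain ⟨q, hqS, hqy⟩ := Finset.mem_image.mp hy
      obtain ⟨hpD, hpc, ⟨dp, hdp1, hdpub, hdpe, hdpe'⟩, -⟩ := hext p hpS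
      obtain ⟨hqD, hqc, ⟨dq, hdq1, hdqub, hdqe, hdqe'⟩, -⟩ := hext q hqS
      have hx' : x = dp := by rw [← hpx]; exact hdpe'
      have hy' : y = dq := by rw [← hqy]; exact hdqe'
      rw [hx', hy']
      rw [Nat.mul_comm p.1 c] at hdpe
      rw [Nat.mul_comm q.1 c] at hdqe
      exact cong_mod hg2 (by omega) (by omega) hdpe hdqe
  calc S.card = ∑ d ∈ S.image (fun p : ℕ × ℕ × ℕ => (p.1 * c + 1) / Rep g n),
      (S.filter (fun p : ℕ × ℕ × ℕ => (p.1 * c + 1) / Rep g n = d)).card := hcardS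
  _ ≤ ∑ _d ∈ S.image (fun p : ℕ × ℕ × ℕ => (p.1 * c + 1) / Rep g n), 2 :=
      Finset.sum_le_sum hsub
  _ = 2 * (S.image (fun p : ℕ × ℕ × ℕ => (p.1 * c + 1) / Rep g n)).card := by
      rw [Finset.sum_const, smul_eq_mul, Nat.mul_comm]
  _ ≤ 2 * ((g - 1) / c + 1) := Nat.mul_le_mul_left _ hJcard

end S16

namespace S16

lemma Rep_one {g : ℕ} : Rep g 1 = 1 := by simp [Rep]

lemma triple_data {g : ℕ} (hg : 100 ≤ g) {p : ℕ × ℕ × ℕ} (hp : p ∈ DioTriplesT g) :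
    ∃ d₁ m d₂ n, (1 ≤ d₁ ∧ d₁ ≤ g - 1 ∧ 1 ≤ m ∧ m ≤ 12 ∧ p.1 * p.2.1 + 1 = d₁ * Rep g m)
      ∧ (1 ≤ d₂ ∧ d₂ ≤ g - 1 ∧ 1 ≤ n ∧ n ≤ 6 ∧ p.1 * p.2.2 + 1 = d₂ * Rep g n)
      ∧ p.2.2 ≤ 3 * g ∧ p.1 ≤ g ^ 12 := by
  obtain ⟨hc0, hcb, hba, hP, hQ, hS⟩ := hp
  obtain ⟨d₁, m, hd₁1, hd₁ub, hm1, e1⟩ := decomp (by omega) hP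
  obtain ⟨d₂, n, hd₂1, hd₂ub, hn1, e2⟩ := decomp (by omega) hQ
  obtain ⟨d₃, l, hd₃1, hd₃ub, hl1, e3⟩ := decomp (by omega) hS
  obtain ⟨hc3, hn6, hm12⟩ := triple_bounds hg (by omega) hcb hba
    hd₁1 hd₁ub hm1 e1 hd₂1 hd₂ub hn1 e2 hd₃1 hd₃ub hl1 e3
  refine ⟨d₁, m, d₂, n, ⟨hd₁1, hd₁ub, hm1, hm12, e1⟩, ⟨hd₂1, hd₂ub, hn1, hn6, e2⟩, hc3, ?_⟩
  have h1 : p.1 ≤ p.1 * p.2.1 := Nat.le_mul_of_pos_right _ (by omega)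
  have h2 : p.1 * p.2.1 + 1 ≤ g ^ m - 1 := val_ub (by omega) hd₁ub e1
  have h3 : g ^ m ≤ g ^ 12 := Nat.pow_le_pow_right (by omega) hm12
  omega

lemma finite_D {g : ℕ} (hg : 100 ≤ g) : (DioTriplesT g).Finite := by
  apply Set.Finite.subset (Finset.finite_toSet
    ((Finset.range (g ^ 12 + 1)) ×ˢ (Finset.range (g ^ 12 + 1)) ×ˢ (Finset.range (g ^ 12 + 1))))
  intro p hp
  obtain ⟨-, -, -, -, -, -, -, ha⟩ := triple_data hg hp
  obtain ⟨hc0, hcb, hba, -⟩ := hp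
  simp only [Finset.mem_coe, Finset.mem_product, Finset.mem_range]
  exact ⟨by omega, by omega, by omega⟩

open scoped Classical

/-- case A : triples with a one-digit product `ab+1` -/
lemma caseA {g : ℕ} (hg : 100 ≤ g) (F : Finset (ℕ × ℕ × ℕ))
    (hF : ∀ p ∈ F, p ∈ DioTriplesT g) :
    (F.filter (fun p : ℕ × ℕ × ℕ => p.1 * p.2.1 + 1 ≤ g - 1)).card
      ≤ ∑ a ∈ Finset.Icc 2 g, (min a (g / a)) * (g / a) := by
  have hsub : F.filter (fun p : ℕ × ℕ × ℕ => p.1 * p.2.1 + 1 ≤ g - 1)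
      ⊆ (Finset.Icc 2 g).biUnion (fun a =>
        ({a} : Finset ℕ) ×ˢ (Finset.Icc 1 (min a (g / a)) ×ˢ Finset.Icc 1 (g / a))) := by
    intro p hp
    obtain ⟨hpF, hple⟩ := Finset.mem_filter.mp hp
    obtain ⟨hc0, hcb, hba, -⟩ := hF p hpF
    have ha0 : 0 < p.1 := by omega
    have hab : p.1 * p.2.1 ≤ g := by omega
    have h1 : p.1 ≤ p.1 * p.2.1 := Nat.le_mul_of_pos_right _ (by omega)
    have hbdiv : p.2.1 ≤ g / p.1 := by
      rw [Nat.le_div_iff_mul_le ha0]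
      rw [Nat.mul_comm]; exact hab
    refine Finset.mem_biUnion.mpr ⟨p.1, Finset.mem_Icc.mpr ⟨by omega, by omega⟩, ?_⟩
    refine Finset.mem_product.mpr ⟨Finset.mem_singleton.mpr rfl, ?_⟩
    refine Finset.mem_product.mpr ⟨Finset.mem_Icc.mpr ⟨by omega, le_min (by omega) hbdiv⟩,
      Finset.mem_Icc.mpr ⟨by omega, le_trans (by omega) hbdiv⟩⟩
  calc (F.filter (fun p : ℕ × ℕ × ℕ => p.1 * p.2.1 + 1 ≤ g - 1)).card
      ≤ ((Finset.Icc 2 g).biUnion (fun a =>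
        ({a} : Finset ℕ) ×ˢ (Finset.Icc 1 (min a (g / a)) ×ˢ Finset.Icc 1 (g / a)))).card :=
      Finset.card_le_card hsub
  _ ≤ ∑ a ∈ Finset.Icc 2 g,
      (({a} : Finset ℕ) ×ˢ (Finset.Icc 1 (min a (g / a)) ×ˢ Finset.Icc 1 (g / a))).card :=
      Finset.card_biUnion_le
  _ = ∑ a ∈ Finset.Icc 2 g, (min a (g / a)) * (g / a) := by
      apply Finset.sum_congr rfl
      intro a _
      rw [Finset.card_product, Finset.card_product, Finset.card_singleton,
        Nat.card_Icc, Nat.card_Icc]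
      simp
  _ ≤ _ := le_refl _

/-- case B : triples with a multi-digit product `ab+1` -/
lemma caseB {g : ℕ} (hg : 100 ≤ g) (F : Finset (ℕ × ℕ × ℕ))
    (hF : ∀ p ∈ F, p ∈ DioTriplesT g) :
    (F.filter (fun p : ℕ × ℕ × ℕ => ¬(p.1 * p.2.1 + 1 ≤ g - 1))).card
      ≤ ∑ c ∈ Finset.Icc 1 (3 * g), 66 * (2 * ((g - 1) / c + 1)) := by
  set box : Finset (ℕ × ℕ × ℕ) :=
    (Finset.Icc 1 (3 * g)) ×ˢ ((Finset.Icc 1 6) ×ˢ (Finset.Icc 2 12)) with hbox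
  have hsub : F.filter (fun p : ℕ × ℕ × ℕ => ¬(p.1 * p.2.1 + 1 ≤ g - 1))
      ⊆ box.biUnion (fun t => F.filter (fun p : ℕ × ℕ × ℕ => p.2.2 = t.1 ∧
          (∃ d₂, 1 ≤ d₂ ∧ d₂ ≤ g - 1 ∧ p.1 * p.2.2 + 1 = d₂ * Rep g t.2.1) ∧
          (∃ d₁, 1 ≤ d₁ ∧ d₁ ≤ g - 1 ∧ p.1 * p.2.1 + 1 = d₁ * Rep g t.2.2))) := by
    intro p hp
    obtain ⟨hpF, hpgt⟩ := Finset.mem_filter.mp hp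
    obtain ⟨d₁, m, d₂, n, ⟨hd₁1, hd₁ub, hm1, hm12, e1⟩,
      ⟨hd₂1, hd₂ub, hn1, hn6, e2⟩, hc3, -⟩ := triple_data hg (hF p hpF)
    obtain ⟨hc0, -, -, -⟩ := hF p hpF
    have hm2 : 2 ≤ m := by
      by_contra hcon
      have hm1' : m = 1 := by omega
      rw [hm1', Rep_one, Nat.mul_one] at e1
      omega
    refine Finset.mem_biUnion.mpr ⟨(p.2.2, n, m), ?_, ?_⟩
    · refine Finset.mem_product.mpr ⟨Finset.mem_Icc.mpr ⟨by omega, hc3⟩, ?_⟩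
      exact Finset.mem_product.mpr ⟨Finset.mem_Icc.mpr ⟨hn1, hn6⟩,
        Finset.mem_Icc.mpr ⟨hm2, hm12⟩⟩
    · exact Finset.mem_filter.mpr ⟨hpF, rfl, ⟨d₂, hd₂1, hd₂ub, e2⟩, ⟨d₁, hd₁1, hd₁ub, e1⟩⟩
  calc (F.filter (fun p : ℕ × ℕ × ℕ => ¬(p.1 * p.2.1 + 1 ≤ g - 1))).card
      ≤ ∑ t ∈ box, (F.filter (fun p : ℕ × ℕ × ℕ => p.2.2 = t.1 ∧
          (∃ d₂, 1 ≤ d₂ ∧ d₂ ≤ g - 1 ∧ p.1 * p.2.2 + 1 = d₂ * Rep g t.2.1) ∧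
          (∃ d₁, 1 ≤ d₁ ∧ d₁ ≤ g - 1 ∧ p.1 * p.2.1 + 1 = d₁ * Rep g t.2.2))).card :=
      le_trans (Finset.card_le_card hsub) Finset.card_biUnion_le
  _ ≤ ∑ t ∈ box, 2 * ((g - 1) / t.1 + 1) := by
      apply Finset.sum_le_sum
      intro t ht
      obtain ⟨ht1, ht2⟩ := Finset.mem_product.mp ht
      obtain ⟨htn, htm⟩ := Finset.mem_product.mp ht2
      exact fiber_card hg F hF t.1 t.2.1 t.2.2 (Finset.mem_Icc.mp ht1).1
        (Finset.mem_Icc.mp htn).1 (Finset.mem_Icc.mp htm).1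
  _ = ∑ c ∈ Finset.Icc 1 (3 * g), 66 * (2 * ((g - 1) / c + 1)) := by
      rw [hbox, Finset.sum_product]
      apply Finset.sum_congr rfl
      intro c _
      simp only [Finset.sum_const, Finset.card_product, Nat.card_Icc, smul_eq_mul]

/-- numeric bound on the case-B sum -/
lemma sumB_bound {g : ℕ} (hg : 100 ≤ g) :
    ∑ c ∈ Finset.Icc 1 (3 * g), 66 * (2 * ((g - 1) / c + 1))
      ≤ 528 * (g * Nat.sqrt g) + 528 * g := by
  set s := Nat.sqrt g with hs
  have hs1 : 1 ≤ s := by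
    have := Nat.sqrt_le_sqrt (show 1 ≤ g by omega)
    simpa using this
  have hsg : s ≤ 3 * g := by
    have := Nat.sqrt_le_self g
    omega
  have hsplit : Finset.Icc 1 (3 * g) = Finset.Ioc 0 s ∪ Finset.Ioc s (3 * g) := by
    rw [Finset.Ioc_union_Ioc_eq_Ioc (Nat.zero_le s) hsg]
    rw [← Finset.Icc_add_one_left_eq_Ioc]; rfl
  have hdisj : Disjoint (Finset.Ioc 0 s) (Finset.Ioc s (3 * g)) := by
    apply Finset.disjoint_left.mpr
    intro x hx hx'
    have := (Finset.mem_Ioc.mp hx).2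
    have := (Finset.mem_Ioc.mp hx').1
    omega
  rw [hsplit, Finset.sum_union hdisj]
  have hb1 : ∑ c ∈ Finset.Ioc 0 s, 66 * (2 * ((g - 1) / c + 1)) ≤ s * (132 * g + 132) := by
    calc ∑ c ∈ Finset.Ioc 0 s, 66 * (2 * ((g - 1) / c + 1))
        ≤ ∑ _c ∈ Finset.Ioc 0 s, (132 * g + 132) := by
          apply Finset.sum_le_sum
          intro c hc
          have h1 : (g - 1) / c ≤ g - 1 := Nat.div_le_self _ _
          omega
    _ = s * (132 * g + 132) := by
        rw [Finset.sum_const, Nat.card_Ioc, smul_eq_mul]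
        simp
  have hb2 : ∑ c ∈ Finset.Ioc s (3 * g), 66 * (2 * ((g - 1) / c + 1))
      ≤ (3 * g) * (132 * s + 132) := by
    calc ∑ c ∈ Finset.Ioc s (3 * g), 66 * (2 * ((g - 1) / c + 1))
        ≤ ∑ _c ∈ Finset.Ioc s (3 * g), (132 * s + 132) := by
          apply Finset.sum_le_sum
          intro c hc
          have hcs : s + 1 ≤ c := (Finset.mem_Ioc.mp hc).1
          have h1 : (g - 1) / c ≤ (g - 1) / (s + 1) :=
            Nat.div_le_div_left hcs (by omega)
          have h2 : (g - 1) / (s + 1) ≤ s := by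
            have h3 : g < (s + 1) * (s + 1) := Nat.lt_succ_sqrt g
            have h4 : (g - 1) / (s + 1) < s + 1 := by
              rw [Nat.div_lt_iff_lt_mul (by omega)]
              omega
            omega
          omega
    _ ≤ (3 * g) * (132 * s + 132) := by
        rw [Finset.sum_const, Nat.card_Ioc, smul_eq_mul]
        have : 3 * g - s ≤ 3 * g := by omega
        exact Nat.mul_le_mul_right _ this
  -- combine : s*(132g+132) + 3g*(132 s + 132) ≤ 528 g s + 396 g
  have hsg' : s ≤ g := Nat.sqrt_le_self g
  have key : s * (132 * g + 132) + 3 * g * (132 * s + 132)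
      ≤ 528 * (g * s) + 528 * g := by nlinarith
  omega

end S16

namespace S16

lemma rep_small {g N : ℕ} (hg : 2 ≤ g) (h1 : 1 ≤ N) (h2 : N ≤ g - 1) : RepdigitT g N :=
  ⟨by omega, N, 1, h1, h2, le_refl 1, by rw [pow_one]⟩

/-- the explicit family of small triples -/
lemma lower_bound_card {g : ℕ} (hg : 10000 ≤ g) (hfin : (DioTriplesT g).Finite) :
    (Nat.sqrt (g - 2) / 3) ^ 3 ≤ hfin.toFinset.card := by
  set s := Nat.sqrt (g - 2) / 3 with hs
  have hs9 : 9 * (s * s) ≤ g - 2 := by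
    have h1 : 3 * s ≤ Nat.sqrt (g - 2) := by omega
    have h2 : Nat.sqrt (g - 2) * Nat.sqrt (g - 2) ≤ g - 2 := Nat.sqrt_le _
    calc 9 * (s * s) = (3 * s) * (3 * s) := by ring
    _ ≤ Nat.sqrt (g - 2) * Nat.sqrt (g - 2) := Nat.mul_le_mul h1 h1
    _ ≤ g - 2 := h2
  have hs1 : 1 ≤ s := by
    have h30 : 30 ≤ Nat.sqrt (g - 2) := by
      have : 30 * 30 ≤ g - 2 := by omega
      exact (Nat.le_sqrt.mpr (by omega))
    omega
  set P : Finset (ℕ × ℕ × ℕ) :=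
    (Finset.Ioc (2 * s) (3 * s)) ×ˢ ((Finset.Ioc s (2 * s)) ×ˢ (Finset.Icc 1 s)) with hP
  have hsubset : P ⊆ hfin.toFinset := by
    intro p hp
    rw [Set.Finite.mem_toFinset]
    obtain ⟨hpa, hp2⟩ := Finset.mem_product.mp hp
    obtain ⟨hpb, hpc⟩ := Finset.mem_product.mp hp2
    obtain ⟨ha1, ha2⟩ := Finset.mem_Ioc.mp hpa
    obtain ⟨hb1, hb2⟩ := Finset.mem_Ioc.mp hpb
    obtain ⟨hc1, hc2⟩ := Finset.mem_Icc.mp hpc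
    have hab : p.1 * p.2.1 ≤ g - 2 := by
      calc p.1 * p.2.1 ≤ (3 * s) * (2 * s) := Nat.mul_le_mul ha2 hb2
      _ = 6 * (s * s) := by ring
      _ ≤ g - 2 := by omega
    have hac : p.1 * p.2.2 ≤ p.1 * p.2.1 := Nat.mul_le_mul_left _ (by omega)
    have hbc : p.2.1 * p.2.2 ≤ p.1 * p.2.1 := Nat.mul_le_mul (by omega) (by omega)
    refine ⟨by omega, by omega, by omega, ?_, ?_, ?_⟩
    · exact rep_small (by omega) (by omega) (by omega)
    · exact rep_small (by omega) (by omega) (by omega)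
    · exact rep_small (by omega) (by omega) (by omega)
  have hcard : P.card = s ^ 3 := by
    rw [hP, Finset.card_product, Finset.card_product, Nat.card_Ioc, Nat.card_Ioc,
      Nat.card_Icc]
    have e1 : 3 * s - 2 * s = s := by omega
    have e2 : 2 * s - s = s := by omega
    have e3 : s + 1 - 1 = s := by omega
    rw [e1, e2, e3]
    ring
  calc s ^ 3 = P.card := hcard.symm
  _ ≤ hfin.toFinset.card := Finset.card_le_card hsubset

/-- telescoping bound for the sum of inverse squares -/
lemma sum_inv_sq {s : ℕ} (hs : 1 ≤ s) : ∀ M, s ≤ M →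
    ∑ a ∈ Finset.Ioc s M, ((1:ℝ) / (a:ℝ) ^ 2) ≤ 1 / s - 1 / M := by
  intro M hM
  induction M, hM using Nat.le_induction with
  | base => simp
  | succ M hM ih =>
      rw [Finset.sum_Ioc_succ_top hM]
      have hM0 : (0:ℝ) < (M:ℝ) := by
        have : 1 ≤ M := le_trans hs hM
        exact_mod_cast (by omega : 0 < M)
      have hM1 : (0:ℝ) < (M:ℝ) + 1 := by linarith
      have step : ((1:ℝ) / ((M+1:ℕ):ℝ) ^ 2) ≤ 1 / M - 1 / ((M:ℝ) + 1) := by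
        push_cast
        rw [div_sub_div _ _ (ne_of_gt hM0) (ne_of_gt hM1)]
        rw [div_le_div_iff₀ (by positivity) (by positivity)]
        ring_nf
        nlinarith
      have hcast : ((M:ℝ) + 1) = ((M + 1 : ℕ) : ℝ) := by push_cast; ring
      calc ∑ a ∈ Finset.Ioc s M, ((1:ℝ) / (a:ℝ) ^ 2) + (1:ℝ) / ((M+1:ℕ):ℝ) ^ 2
          ≤ (1 / s - 1 / M) + (1 / M - 1 / ((M:ℝ) + 1)) := by
            linarith [ih]
      _ = 1 / s - 1 / ((M:ℝ) + 1) := by ring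
      _ = 1 / s - 1 / ((M + 1 : ℕ) : ℝ) := by rw [hcast]

/-- real version of the case A bound -/
lemma caseA_real {g : ℕ} (hg : 10000 ≤ g) :
    ((∑ a ∈ Finset.Icc 2 g, (min a (g / a)) * (g / a) : ℕ) : ℝ)
      ≤ 3 * (g:ℝ) * Real.sqrt g := by
  set s := Nat.sqrt g with hs
  have hs1 : 100 ≤ s := Nat.le_sqrt.mpr (by nlinarith)
  have hsg : s ≤ g := Nat.sqrt_le_self g
  have hsplit : Finset.Icc 2 g = Finset.Ioc 1 s ∪ Finset.Ioc s g := by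
    rw [Finset.Ioc_union_Ioc_eq_Ioc (by omega) hsg]
    rw [← Finset.Icc_add_one_left_eq_Ioc]; rfl
  have hdisj : Disjoint (Finset.Ioc 1 s) (Finset.Ioc s g) := by
    apply Finset.disjoint_left.mpr
    intro x hx hx'
    have := (Finset.mem_Ioc.mp hx).2
    have := (Finset.mem_Ioc.mp hx').1
    omega
  -- natural number part bounds
  have hb1 : ∑ a ∈ Finset.Ioc 1 s, (min a (g / a)) * (g / a) ≤ s * g := by
    calc ∑ a ∈ Finset.Ioc 1 s, (min a (g / a)) * (g / a)
        ≤ ∑ _a ∈ Finset.Ioc 1 s, g := by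
          apply Finset.sum_le_sum
          intro a ha
          have h1 : min a (g / a) ≤ a := min_le_left _ _
          calc (min a (g / a)) * (g / a) ≤ a * (g / a) := Nat.mul_le_mul_right _ h1
          _ = (g / a) * a := by ring
          _ ≤ g := Nat.div_mul_le_self _ _
    _ = (s - 1) * g := by rw [Finset.sum_const, Nat.card_Ioc, smul_eq_mul]
    _ ≤ s * g := Nat.mul_le_mul_right _ (by omega)
  have hb2 : ∀ a ∈ Finset.Ioc s g, (min a (g / a)) * (g / a) ≤ (g / a) * (g / a) := by
    intro a ha
    exact Nat.mul_le_mul_right _ (min_le_right _ _)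
  -- real estimates
  have hsR : (0:ℝ) < (s:ℝ) := by exact_mod_cast (by omega : 0 < s)
  have hgR : (0:ℝ) < (g:ℝ) := by exact_mod_cast (by omega : 0 < g)
  have hcast2 : ((∑ a ∈ Finset.Ioc s g, (g / a) * (g / a) : ℕ) : ℝ)
      ≤ (g:ℝ) ^ 2 * ((1:ℝ) / s) := by
    push_cast
    have hterm : ∀ a ∈ Finset.Ioc s g, ((g / a : ℕ) : ℝ) * ((g / a : ℕ) : ℝ)
        ≤ (g:ℝ) ^ 2 * ((1:ℝ) / (a:ℝ) ^ 2) := by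
      intro a ha
      have ha1 : 1 ≤ a := by
        have := (Finset.mem_Ioc.mp ha).1
        omega
      have haR : (0:ℝ) < (a:ℝ) := by exact_mod_cast (by omega : 0 < a)
      have h1 : ((g / a : ℕ) : ℝ) ≤ (g:ℝ) / (a:ℝ) := Nat.cast_div_le
      have h2 : (0:ℝ) ≤ ((g / a : ℕ) : ℝ) := by positivity
      calc ((g / a : ℕ) : ℝ) * ((g / a : ℕ) : ℝ) ≤ ((g:ℝ) / a) * ((g:ℝ) / a) :=
            mul_le_mul h1 h1 h2 (by positivity)
      _ = (g:ℝ) ^ 2 * ((1:ℝ) / (a:ℝ) ^ 2) := by field_simp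
    calc ∑ a ∈ Finset.Ioc s g, ((g / a : ℕ) : ℝ) * ((g / a : ℕ) : ℝ)
        ≤ ∑ a ∈ Finset.Ioc s g, (g:ℝ) ^ 2 * ((1:ℝ) / (a:ℝ) ^ 2) :=
          Finset.sum_le_sum hterm
    _ = (g:ℝ) ^ 2 * ∑ a ∈ Finset.Ioc s g, ((1:ℝ) / (a:ℝ) ^ 2) := by
          rw [Finset.mul_sum]
    _ ≤ (g:ℝ) ^ 2 * ((1:ℝ) / s) := by
          apply mul_le_mul_of_nonneg_left _ (by positivity)
          have := sum_inv_sq (by omega : 1 ≤ s) g hsg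
          have hMg : (0:ℝ) ≤ 1 / (g:ℝ) := by positivity
          linarith
  -- combine
  have hsqrt1 : (s:ℝ) ≤ Real.sqrt g :=
    (Real.le_sqrt (by positivity) (by positivity)).mpr (by
      have := Nat.sqrt_le' g
      exact_mod_cast (by exact_mod_cast this : ((s ^ 2 : ℕ) : ℝ) ≤ (g:ℝ)))
  have hsqrt2 : Real.sqrt g ≤ (s:ℝ) + 1 := by
    have h1 : (g:ℝ) < ((s:ℝ) + 1) ^ 2 := by
      have := Nat.lt_succ_sqrt g
      have h2 : (g:ℝ) < ((s + 1 : ℕ) : ℝ) * ((s + 1 : ℕ) : ℝ) := by exact_mod_cast this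
      push_cast at h2
      nlinarith
    nlinarith [Real.sq_sqrt (le_of_lt hgR), Real.sqrt_nonneg (g:ℝ), hsR]
  have hfinal1 : ((s * g : ℕ) : ℝ) ≤ (g:ℝ) * Real.sqrt g := by
    push_cast
    calc (s:ℝ) * g ≤ Real.sqrt g * g := mul_le_mul_of_nonneg_right hsqrt1 (le_of_lt hgR)
    _ = (g:ℝ) * Real.sqrt g := by ring
  have hfinal2 : (g:ℝ) ^ 2 * ((1:ℝ) / s) ≤ 2 * (g:ℝ) * Real.sqrt g := by
    have key : (g:ℝ) ^ 2 ≤ 2 * (g:ℝ) * Real.sqrt g * s := by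
      have h1 : Real.sqrt g * Real.sqrt g = (g:ℝ) := by
        have := Real.sq_sqrt (le_of_lt hgR)
        nlinarith [this]
      have hs1R : (1:ℝ) ≤ (s:ℝ) := by exact_mod_cast (by omega : 1 ≤ s)
      have h2 : Real.sqrt g ≤ 2 * s := by linarith [hsqrt2]
      calc (g:ℝ) ^ 2 = (Real.sqrt g * Real.sqrt g) * (Real.sqrt g * Real.sqrt g) := by
            rw [h1]; ring
      _ = (Real.sqrt g * Real.sqrt g * Real.sqrt g) * Real.sqrt g := by ring
      _ ≤ (Real.sqrt g * Real.sqrt g * Real.sqrt g) * (2 * s) := by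
            apply mul_le_mul_of_nonneg_left h2
            positivity
      _ = 2 * ((Real.sqrt g * Real.sqrt g) * Real.sqrt g) * s := by ring
      _ = 2 * (g:ℝ) * Real.sqrt g * s := by rw [h1]; ring
    calc (g:ℝ) ^ 2 * (1 / (s:ℝ)) ≤ (2 * (g:ℝ) * Real.sqrt g * s) * (1 / s) := by
          apply mul_le_mul_of_nonneg_right key
          positivity
    _ = 2 * (g:ℝ) * Real.sqrt g := by field_simp
  -- put all together
  have hsum : (∑ a ∈ Finset.Icc 2 g, (min a (g / a)) * (g / a) : ℕ)
      ≤ s * g + ∑ a ∈ Finset.Ioc s g, (g / a) * (g / a) := by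
    rw [hsplit, Finset.sum_union hdisj]
    have := Finset.sum_le_sum hb2
    omega
  calc ((∑ a ∈ Finset.Icc 2 g, (min a (g / a)) * (g / a) : ℕ) : ℝ)
      ≤ ((s * g + ∑ a ∈ Finset.Ioc s g, (g / a) * (g / a) : ℕ) : ℝ) := by
        exact_mod_cast hsum
  _ = ((s * g : ℕ) : ℝ) + ((∑ a ∈ Finset.Ioc s g, (g / a) * (g / a) : ℕ) : ℝ) := by
        push_cast; ring
  _ ≤ (g:ℝ) * Real.sqrt g + (g:ℝ) ^ 2 * ((1:ℝ) / s) := by linarith [hfinal1, hcast2]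
  _ ≤ (g:ℝ) * Real.sqrt g + 2 * (g:ℝ) * Real.sqrt g := by linarith [hfinal2]
  _ = 3 * (g:ℝ) * Real.sqrt g := by ring

end S16

theorem stmt_16 :
    ∃ c₁ c₂ : ℝ, 0 < c₁ ∧ 0 < c₂ ∧ ∃ G : ℕ, ∀ g : ℕ, G ≤ g →
      (DioTriplesT g).Finite ∧
      c₁ * (g : ℝ) ^ ((3 : ℝ) / 2) ≤ (Nat.card (DioTriplesT g) : ℝ) ∧
      (Nat.card (DioTriplesT g) : ℝ) ≤ c₂ * (g : ℝ) ^ ((3 : ℝ) / 2) := by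
  classical
  refine ⟨1/64, 10000, by norm_num, by norm_num, 10000, ?_⟩
  intro g hg
  have hg100 : 100 ≤ g := by omega
  have hfin := S16.finite_D hg100
  have hgR : (0:ℝ) < (g:ℝ) := by exact_mod_cast (by omega : 0 < g)
  have hsq : Real.sqrt g * Real.sqrt g = (g:ℝ) := by
    have := Real.sq_sqrt (le_of_lt hgR)
    nlinarith [this]
  have hsqpos : (0:ℝ) < Real.sqrt g := Real.sqrt_pos.mpr hgR
  have h100 : (100:ℝ) ≤ Real.sqrt g := by
    apply (Real.le_sqrt (by norm_num) (le_of_lt hgR)).mpr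
    have : (10000:ℝ) ≤ (g:ℝ) := by exact_mod_cast hg
    nlinarith
  have hpow : (g:ℝ) ^ ((3:ℝ)/2) = (g:ℝ) * Real.sqrt g := by
    rw [show ((3:ℝ)/2) = 1 + 1/2 by norm_num, Real.rpow_add hgR, Real.rpow_one,
      ← Real.sqrt_eq_rpow]
  have hcard : (Nat.card (DioTriplesT g) : ℝ) = (hfin.toFinset.card : ℝ) := by
    rw [Nat.card_coe_set_eq, Set.ncard_eq_toFinset_card _ hfin]
  refine ⟨hfin, ?_, ?_⟩
  · -- lower bound
    have hle := S16.lower_bound_card hg hfin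
    set t := Nat.sqrt (g - 2) with ht
    set s' := t / 3 with hs'
    have hx : ((g - 2 : ℕ) : ℝ) = (g:ℝ) - 2 := by
      rw [Nat.cast_sub (by omega)]; norm_num
    have ht1 : ((g:ℝ) - 2) < ((t:ℝ) + 1) ^ 2 := by
      have h1 := Nat.lt_succ_sqrt (g - 2)
      have h2 : ((g - 2 : ℕ) : ℝ) < ((t + 1 : ℕ) : ℝ) * ((t + 1 : ℕ) : ℝ) := by
        exact_mod_cast h1
      rw [hx] at h2
      push_cast at h2
      nlinarith
    have htR : (0:ℝ) ≤ (t:ℝ) := by positivity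
    have ht2 : Real.sqrt ((g:ℝ) - 2) < (t:ℝ) + 1 := by
      apply (Real.sqrt_lt' (by positivity)).mpr ht1
    have ht3 : Real.sqrt g - 1 ≤ Real.sqrt ((g:ℝ) - 2) := by
      apply (Real.le_sqrt (by linarith) (by linarith)).mpr
      nlinarith
    have ht4 : Real.sqrt g - 2 ≤ (t:ℝ) := by linarith
    have hs'1 : t ≤ 3 * s' + 2 := by omega
    have hs'2 : ((Real.sqrt g) - 4) / 3 ≤ (s':ℝ) := by
      have h1 : (t:ℝ) ≤ 3 * (s':ℝ) + 2 := by exact_mod_cast hs'1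
      linarith
    have hs'3 : Real.sqrt g / 4 ≤ (s':ℝ) := by linarith
    have hcube : (Real.sqrt g / 4) ^ 3 ≤ ((s':ℝ)) ^ 3 :=
      pow_le_pow_left₀ (by positivity) hs'3 3
    have hcubeval : (Real.sqrt g) ^ 3 = (g:ℝ) * Real.sqrt g := by
      calc (Real.sqrt g) ^ 3 = (Real.sqrt g * Real.sqrt g) * Real.sqrt g := by ring
      _ = (g:ℝ) * Real.sqrt g := by rw [hsq]
    have hcastcard : ((s' ^ 3 : ℕ) : ℝ) ≤ (hfin.toFinset.card : ℝ) := by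
      exact_mod_cast hle
    rw [hcard, hpow]
    have : ((s' ^ 3 : ℕ) : ℝ) = ((s':ℝ)) ^ 3 := by push_cast; ring
    rw [this] at hcastcard
    have hexp : (Real.sqrt g / 4) ^ 3 = (Real.sqrt g) ^ 3 / 64 := by ring
    rw [hexp, hcubeval] at hcube
    linarith
  · -- upper bound
    set F := hfin.toFinset with hF'
    have hF : ∀ p ∈ F, p ∈ DioTriplesT g := fun p hp => (hfin.mem_toFinset).mp hp
    have hsplit := Finset.card_filter_add_card_filter_not
      (s := F) (p := fun p : ℕ × ℕ × ℕ => p.1 * p.2.1 + 1 ≤ g - 1)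
    have hA := S16.caseA hg100 F hF
    have hB := S16.caseB hg100 F hF
    have hBs := S16.sumB_bound hg100
    have hAr := S16.caseA_real hg
    set s := Nat.sqrt g with hs
    have hsqrt1 : (s:ℝ) ≤ Real.sqrt g := by
      apply (Real.le_sqrt (by positivity) (le_of_lt hgR)).mpr
      have := Nat.sqrt_le' g
      exact_mod_cast this
    have hcardF : F.card ≤ (∑ a ∈ Finset.Icc 2 g, (min a (g / a)) * (g / a))
        + (528 * (g * s) + 528 * g) := by
      have h1 : (F.filter (fun p : ℕ × ℕ × ℕ => ¬(p.1 * p.2.1 + 1 ≤ g - 1))).card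
          ≤ 528 * (g * s) + 528 * g := le_trans hB hBs
      omega
    have hreal : (F.card : ℝ) ≤ 3 * (g:ℝ) * Real.sqrt g
        + (528 * ((g:ℝ) * Real.sqrt g) + 528 * (g:ℝ)) := by
      have h2 : ((∑ a ∈ Finset.Icc 2 g, (min a (g / a)) * (g / a)
          + (528 * (g * s) + 528 * g) : ℕ) : ℝ)
          = ((∑ a ∈ Finset.Icc 2 g, (min a (g / a)) * (g / a) : ℕ) : ℝ)
            + (528 * ((g:ℝ) * (s:ℝ)) + 528 * (g:ℝ)) := by push_cast; ring
      have h3 : (F.card : ℝ) ≤ ((∑ a ∈ Finset.Icc 2 g, (min a (g / a)) * (g / a)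
          + (528 * (g * s) + 528 * g) : ℕ) : ℝ) := by exact_mod_cast hcardF
      rw [h2] at h3
      have h4 : 528 * ((g:ℝ) * (s:ℝ)) ≤ 528 * ((g:ℝ) * Real.sqrt g) := by
        apply mul_le_mul_of_nonneg_left _ (by norm_num)
        exact mul_le_mul_of_nonneg_left hsqrt1 (le_of_lt hgR)
      linarith
    rw [hcard, hpow]
    have hgle : (g:ℝ) ≤ (g:ℝ) * Real.sqrt g := by nlinarith
    calc (F.card : ℝ) ≤ 3 * (g:ℝ) * Real.sqrt g
        + (528 * ((g:ℝ) * Real.sqrt g) + 528 * (g:ℝ)) := hreal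
    _ ≤ 10000 * ((g:ℝ) * Real.sqrt g) := by nlinarith
    _ = 10000 * ((g:ℝ) * Real.sqrt g) := rfl
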